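/- Let n ≥ 1, let p ∈ ℝ^n satisfy 0 = p_0 < p_1 < ⋯ < p_n < 1, let g ∈ ℝ^n and define c ∈ ℝ^n by c_j = ∑_{i=j}^n g_i. Then for every ε ∈ ℝ^n, ⟨c,ε⟩² ≤ γ̃²(p,g) · (εᵀ B_KL(p) ε); moreover B_KL(p) is positive definite, and equality is attained for ε = B_KL(p)⁻¹ c. -/

import Mathlib

open Matrix

-- weighted Cauchy–Schwarz with an extra rank-one term, via discriminant
private lemma cs_aux {m : ℕ} (w : Fin m → ℝ) (α : ℝ) (hw : ∀ i, 0 ≤ w i) (hα : 0 ≤ α)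
    (v e : Fin m → ℝ) :
    (∑ i, w i * (v i * e i) + α * ((∑ i, v i) * (∑ i, e i))) ^ 2 ≤
    (∑ i, w i * (v i * v i) + α * ((∑ i, v i) * (∑ i, v i))) *
    (∑ i, w i * (e i * e i) + α * ((∑ i, e i) * (∑ i, e i))) := by
  set a := ∑ i, w i * (v i * v i) + α * ((∑ i, v i) * (∑ i, v i)) with ha
  set b := ∑ i, w i * (v i * e i) + α * ((∑ i, v i) * (∑ i, e i)) with hb
  set c := ∑ i, w i * (e i * e i) + α * ((∑ i, e i) * (∑ i, e i)) with hc
  have key : ∀ t : ℝ, 0 ≤ a * (t * t) + (2 * b) * t + c := by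
    intro t
    have h1 : a * (t * t) + (2 * b) * t + c
        = ∑ i, w i * ((t * v i + e i) * (t * v i + e i))
          + α * ((t * (∑ i, v i) + (∑ i, e i)) * (t * (∑ i, v i) + (∑ i, e i))) := by
      rw [ha, hb, hc]
      have e1 : ∑ i, w i * ((t * v i + e i) * (t * v i + e i))
          = (t*t) * (∑ i, w i * (v i * v i)) + (2*t) * (∑ i, w i * (v i * e i))
            + ∑ i, w i * (e i * e i) := by
        rw [Finset.mul_sum, Finset.mul_sum, ← Finset.sum_add_distrib, ← Finset.sum_add_distrib]
        exact Finset.sum_congr rfl fun i _ => by ring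
      rw [e1]; ring
    rw [h1]
    have := Finset.sum_nonneg (fun i (_ : i ∈ Finset.univ) =>
      mul_nonneg (hw i) (mul_self_nonneg (t * v i + e i)))
    nlinarith [mul_nonneg hα (mul_self_nonneg (t * (∑ i, v i) + (∑ i, e i)))]
  have hd := discrim_le_zero key
  rw [discrim] at hd
  nlinarith [hd]

private lemma tri_split {m : ℕ} (i j : Fin m) (x : ℝ) :
    x = (if j = i then x else 0) + (if i < j then x else 0) + (if j < i then x else 0) := by
  rcases lt_trichotomy i j with h | h | h
  · rw [if_neg (by exact fun hji => absurd (hji ▸ h) (lt_irrefl _)), if_pos h,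
      if_neg (asymm h)]; ring
  · rw [if_pos h.symm, if_neg (h ▸ lt_irrefl _), if_neg (h ▸ lt_irrefl _)]; ring
  · rw [if_neg (fun hji => absurd (hji ▸ h) (lt_irrefl _)), if_neg (asymm h), if_pos h]; ring

private lemma sq_sum_fin {m : ℕ} (f : Fin m → ℝ) :
    (∑ i, f i) ^ 2 = ∑ i, f i ^ 2 + 2 * ∑ i, ∑ j ∈ Finset.Ioi i, f i * f j := by
  have h : (∑ i, f i) ^ 2 = ∑ i : Fin m, ∑ j : Fin m, f i * f j := by
    rw [sq, Finset.sum_mul_sum]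
  rw [h]
  have h2 : ∑ i : Fin m, ∑ j : Fin m, f i * f j
      = ∑ i : Fin m, ∑ j : Fin m, ((if j = i then f i * f j else 0)
          + ((if i < j then f i * f j else 0) + (if j < i then f i * f j else 0))) := by
    refine Finset.sum_congr rfl fun i _ => Finset.sum_congr rfl fun j _ => ?_
    rw [← add_assoc, ← tri_split i j]
  rw [h2]
  simp only [Finset.sum_add_distrib]
  have hdiag : ∑ i : Fin m, ∑ j : Fin m, (if j = i then f i * f j else 0) = ∑ i, f i ^ 2 := by
    refine Finset.sum_congr rfl fun i _ => ?_
    rw [Finset.sum_ite_eq' Finset.univ i (fun j => f i * f j)]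
    simp [sq]
  have hioi : ∀ (F : Fin m → Fin m → ℝ), ∑ i : Fin m, ∑ j : Fin m, (if i < j then F i j else 0)
      = ∑ i : Fin m, ∑ j ∈ Finset.Ioi i, F i j := by
    intro F
    refine Finset.sum_congr rfl fun i _ => ?_
    rw [← Finset.sum_filter]
    congr 1
    ext j
    rw [Finset.mem_Ioi, Finset.mem_filter]
    simp only [Finset.mem_univ, true_and]
  have hlow : ∑ i : Fin m, ∑ j : Fin m, (if j < i then f i * f j else 0)
      = ∑ i : Fin m, ∑ j ∈ Finset.Ioi i, f i * f j := by
    rw [Finset.sum_comm]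
    rw [hioi (fun j i => f i * f j)]
    exact Finset.sum_congr rfl fun i _ => Finset.sum_congr rfl fun j _ => mul_comm _ _
  rw [hdiag, hioi, hlow]; ring

/-- partial "tail sums" of `g`, as a function on `ℕ`. -/
private noncomputable def Cg {n : ℕ} (g : Fin n → ℝ) (k : ℕ) : ℝ :=
  ∑ i : Fin n, if k ≤ i.val then g i else 0

private lemma Cg_top {n : ℕ} (g : Fin n → ℝ) : Cg g n = 0 := by
  unfold Cg
  exact Finset.sum_eq_zero fun i _ => if_neg (by omega)

private lemma Cg_succ {n : ℕ} (g : Fin n → ℝ) (k : ℕ) (h : k < n) :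
    Cg g k = g ⟨k, h⟩ + Cg g (k + 1) := by
  unfold Cg
  have key : ∀ i : Fin n, (if k ≤ i.val then g i else 0)
      = (if i = ⟨k, h⟩ then g i else 0) + (if k + 1 ≤ i.val then g i else 0) := by
    intro i
    rcases eq_or_ne i ⟨k, h⟩ with hi | hi
    · subst hi; simp
    · have : i.val ≠ k := fun hv => hi (Fin.ext hv)
      rw [if_neg hi]
      by_cases h2 : k + 1 ≤ i.val
      · rw [if_pos (by omega), if_pos h2, zero_add]
      · rw [if_neg (by omega), if_neg h2, zero_add]
  rw [Finset.sum_congr rfl fun i _ => key i, Finset.sum_add_distrib]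
  congr 1
  rw [Finset.sum_ite_eq' Finset.univ (⟨k, h⟩ : Fin n) g, if_pos (Finset.mem_univ _)]

private lemma sum_Ici_eq_Cg {n : ℕ} (g : Fin n → ℝ) (j : Fin n) :
    ∑ i ∈ Finset.Ici j, g i = Cg g j.val := by
  unfold Cg
  rw [← Finset.sum_filter]
  congr 1
  ext i
  rw [Finset.mem_Ici, Finset.mem_filter]
  simp only [Finset.mem_univ, true_and]
  exact Iff.rfl

private lemma sum_Ioi_eq_Cg {n : ℕ} (g : Fin n → ℝ) (j : Fin n) :
    ∑ i ∈ Finset.Ioi j, g i = Cg g (j.val + 1) := by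
  unfold Cg
  rw [← Finset.sum_filter]
  congr 1
  ext i
  rw [Finset.mem_Ioi, Finset.mem_filter]
  simp only [Finset.mem_univ, true_and]
  exact ⟨fun h => h, fun h => h⟩

private lemma sum_Iic_fin {n : ℕ} (F : ℕ → ℝ) (j : Fin n) :
    ∑ i ∈ Finset.Iic j, F i.val = ∑ k ∈ Finset.range (j.val + 1), F k := by
  have h1 : Finset.Iic j = Finset.univ.filter (fun i : Fin n => i.val ≤ j.val) := by
    ext i
    rw [Finset.mem_Iic, Finset.mem_filter]
    simp only [Finset.mem_univ, true_and]
    exact Iff.rfl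
  rw [h1, Finset.sum_filter, Fin.sum_univ_eq_sum_range (fun k => if k ≤ j.val then F k else 0) n,
    ← Finset.sum_filter]
  congr 1
  ext k
  simp only [Finset.mem_filter, Finset.mem_range]
  exact ⟨fun ⟨_, h⟩ => by omega, fun h => ⟨by omega, by omega⟩⟩

private lemma sum_ite_ge {n : ℕ} (j : Fin n) (f : Fin n → ℝ) :
    ∑ i : Fin n, (if j ≤ i then f i else 0) = ∑ i ∈ Finset.Ici j, f i := by
  rw [← Finset.sum_filter]
  congr 1
  ext i
  rw [Finset.mem_Ici, Finset.mem_filter]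
  simp only [Finset.mem_univ, true_and]

private lemma sum_ite_le {n : ℕ} (j : Fin n) (f : Fin n → ℝ) :
    ∑ i : Fin n, (if i ≤ j then f i else 0) = ∑ i ∈ Finset.Iic j, f i := by
  rw [← Finset.sum_filter]
  congr 1
  ext i
  rw [Finset.mem_Iic, Finset.mem_filter]
  simp only [Finset.mem_univ, true_and]

/-- Cauchy–Schwarz property of the modified Gini-weighted smoothness: for
`0 = p₀ < p₁ < ⋯ < pₙ < 1` and `c_j = ∑_{i=j}^n g_i`, one has
`⟨c,ε⟩² ≤ γ̃²(p,g)·(εᵀ B_KL(p) ε)` for every `ε`, the matrix `B_KL(p)` is positive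
definite, and equality holds for `ε = B_KL(p)⁻¹ c`. -/
theorem dotProduct_sq_le_modified_gini_mul_quadForm (n : ℕ) (hn : 1 ≤ n)
    (p : ℕ → ℝ) (g c : Fin n → ℝ)
    (hp0 : p 0 = 0)
    (hmono : ∀ i, i < n → p i < p (i + 1))
    (hpn : p n < 1)
    (hc : ∀ j, c j = ∑ i ∈ Finset.Ici j, g i)
    (B : Matrix (Fin n) (Fin n) ℝ)
    (hB : ∀ i j, B i j =
      (if i = j then 1 / (p (i.val + 1) - p i.val) else 0) + 1 / (1 - p n))
    (γ : ℝ)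
    (hγ : γ = (∑ i, p (i.val + 1) * (1 - p (i.val + 1)) * (g i) ^ 2)
      + 2 * ∑ i, ∑ j ∈ Finset.Ioi i,
          p (i.val + 1) * (1 - p (j.val + 1)) * (g i * g j)) :
    (∀ ε : Fin n → ℝ, (c ⬝ᵥ ε) ^ 2 ≤ γ * (ε ⬝ᵥ (B *ᵥ ε))) ∧
    B.PosDef ∧
    (c ⬝ᵥ (B⁻¹ *ᵥ c)) ^ 2 = γ * ((B⁻¹ *ᵥ c) ⬝ᵥ (B *ᵥ (B⁻¹ *ᵥ c))) := by
  -- basic positivity facts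
  have hd : ∀ i : Fin n, 0 < p (i.val + 1) - p i.val := fun i => sub_pos.2 (hmono i.val i.isLt)
  have h1p : (0:ℝ) < 1 - p n := by linarith
  -- telescoping sums
  have hsum_d : ∑ i : Fin n, (p (i.val + 1) - p i.val) = p n := by
    rw [Fin.sum_univ_eq_sum_range (fun k => p (k + 1) - p k) n, Finset.sum_range_sub, hp0,
      sub_zero]
  have hprefix : ∀ j : Fin n, ∑ i ∈ Finset.Iic j, (p (i.val + 1) - p i.val) = p (j.val + 1) := by
    intro j
    rw [sum_Iic_fin (fun k => p (k + 1) - p k) j, Finset.sum_range_sub, hp0, sub_zero]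
  have hcC : ∀ j : Fin n, c j = Cg g j.val := fun j => by rw [hc j, sum_Ici_eq_Cg]
  -- the weighted sum S
  set S : ℝ := ∑ i : Fin n, p (i.val + 1) * g i with hS
  -- ∑ d_i c_i = S
  have hS3 : ∑ i : Fin n, (p (i.val + 1) - p i.val) * c i = S := by
    have step1 : ∑ i : Fin n, (p (i.val + 1) - p i.val) * c i
        = ∑ i : Fin n, ∑ j : Fin n, (if i ≤ j then (p (i.val + 1) - p i.val) * g j else 0) := by
      refine Finset.sum_congr rfl fun i _ => ?_
      rw [hc i, Finset.mul_sum, ← sum_ite_ge i (fun j => (p (i.val + 1) - p i.val) * g j)]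
    rw [step1, Finset.sum_comm]
    have step2 : ∀ j : Fin n,
        ∑ i : Fin n, (if i ≤ j then (p (i.val + 1) - p i.val) * g j else 0)
        = p (j.val + 1) * g j := by
      intro j
      rw [sum_ite_le j (fun i => (p (i.val + 1) - p i.val) * g j), ← Finset.sum_mul, hprefix j]
    rw [hS]
    exact Finset.sum_congr rfl fun j _ => step2 j
  -- Abel summation identity
  have hAbel : ∑ i : Fin n, (p (i.val + 1) - p i.val) * (c i) ^ 2
      = ∑ i : Fin n, p (i.val + 1) * (g i) ^ 2
        + 2 * ∑ i : Fin n, ∑ j ∈ Finset.Ioi i, p (i.val + 1) * (g i * g j) := by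
    have e1 : ∑ i : Fin n, (p (i.val + 1) - p i.val) * (c i) ^ 2
        = ∑ k ∈ Finset.range n, (p (k + 1) - p k) * (Cg g k) ^ 2 := by
      rw [← Fin.sum_univ_eq_sum_range (fun k => (p (k + 1) - p k) * (Cg g k) ^ 2) n]
      exact Finset.sum_congr rfl fun i _ => by rw [hcC i]
    have e2 : ∑ k ∈ Finset.range n, p k * (Cg g k) ^ 2
        = ∑ k ∈ Finset.range n, p (k + 1) * (Cg g (k + 1)) ^ 2 := by
      have h1 := Finset.sum_range_succ' (fun k => p k * (Cg g k) ^ 2) n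
      have h2 := Finset.sum_range_succ (fun k => p k * (Cg g k) ^ 2) n
      rw [Cg_top] at h2
      rw [hp0] at h1
      rw [h2] at h1
      -- h1 : ∑_{k<n} p k * Cg k ^2 + p n * 0 ^ 2 = ∑_{k<n} p (k+1) * Cg (k+1)^2 + 0 * Cg 0 ^2
      nlinarith [h1]
    have e3 : ∑ k ∈ Finset.range n, (p (k + 1) - p k) * (Cg g k) ^ 2
        = ∑ k ∈ Finset.range n, (p (k + 1) * (Cg g k - Cg g (k + 1)) ^ 2
            + 2 * (p (k + 1) * ((Cg g k - Cg g (k + 1)) * Cg g (k + 1)))) := by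
      have expand : ∀ k : ℕ, (p (k + 1) - p k) * (Cg g k) ^ 2
          = (p (k + 1) * (Cg g k - Cg g (k + 1)) ^ 2
              + 2 * (p (k + 1) * ((Cg g k - Cg g (k + 1)) * Cg g (k + 1))))
            + (p (k + 1) * (Cg g (k + 1)) ^ 2 - p k * (Cg g k) ^ 2) := fun k => by ring
      rw [Finset.sum_congr rfl fun k _ => expand k, Finset.sum_add_distrib,
        Finset.sum_sub_distrib, ← e2, sub_self, add_zero]
    have e4 : ∑ k ∈ Finset.range n, (p (k + 1) * (Cg g k - Cg g (k + 1)) ^ 2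
            + 2 * (p (k + 1) * ((Cg g k - Cg g (k + 1)) * Cg g (k + 1))))
        = ∑ i : Fin n, (p (i.val + 1) * (Cg g i.val - Cg g (i.val + 1)) ^ 2
            + 2 * (p (i.val + 1) * ((Cg g i.val - Cg g (i.val + 1)) * Cg g (i.val + 1)))) := by
      rw [Fin.sum_univ_eq_sum_range (fun k => (p (k + 1) * (Cg g k - Cg g (k + 1)) ^ 2
            + 2 * (p (k + 1) * ((Cg g k - Cg g (k + 1)) * Cg g (k + 1))))) n]
    have e5 : ∀ i : Fin n, Cg g i.val - Cg g (i.val + 1) = g i := by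
      intro i
      rw [Cg_succ g i.val i.isLt]
      simp
    rw [e1, e3, e4]
    have e6 : ∀ i : Fin n, (p (i.val + 1) * (Cg g i.val - Cg g (i.val + 1)) ^ 2
            + 2 * (p (i.val + 1) * ((Cg g i.val - Cg g (i.val + 1)) * Cg g (i.val + 1))))
        = p (i.val + 1) * (g i) ^ 2
            + 2 * ∑ j ∈ Finset.Ioi i, p (i.val + 1) * (g i * g j) := by
      intro i
      rw [e5 i, ← sum_Ioi_eq_Cg g i]
      simp only [Finset.mul_sum]
    rw [Finset.sum_congr rfl fun i _ => e6 i, Finset.sum_add_distrib, ← Finset.mul_sum]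
  -- γ in closed form
  have hgamma : γ = ∑ i : Fin n, (p (i.val + 1) - p i.val) * (c i) ^ 2 - S ^ 2 := by
    have h5 := sq_sum_fin (fun i : Fin n => p (i.val + 1) * g i)
    have t1 : ∑ i : Fin n, p (i.val + 1) * (1 - p (i.val + 1)) * (g i) ^ 2
        = ∑ i : Fin n, p (i.val + 1) * (g i) ^ 2
          - ∑ i : Fin n, (p (i.val + 1) * g i) ^ 2 := by
      rw [← Finset.sum_sub_distrib]
      exact Finset.sum_congr rfl fun i _ => by ring
    have t2 : ∑ i : Fin n, ∑ j ∈ Finset.Ioi i,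
          p (i.val + 1) * (1 - p (j.val + 1)) * (g i * g j)
        = ∑ i : Fin n, ∑ j ∈ Finset.Ioi i, p (i.val + 1) * (g i * g j)
          - ∑ i : Fin n, ∑ j ∈ Finset.Ioi i,
              (p (i.val + 1) * g i) * (p (j.val + 1) * g j) := by
      rw [← Finset.sum_sub_distrib]
      refine Finset.sum_congr rfl fun i _ => ?_
      rw [← Finset.sum_sub_distrib]
      exact Finset.sum_congr rfl fun j _ => by ring
    rw [hγ, t1, t2, hAbel, hS, h5]
    ring
  -- the optimal vector u
  set u : Fin n → ℝ := fun i => (p (i.val + 1) - p i.val) * (c i - S) with hu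
  have husum : ∑ i : Fin n, u i = (1 - p n) * S := by
    have : ∀ i : Fin n, u i = (p (i.val + 1) - p i.val) * c i
        - (p (i.val + 1) - p i.val) * S := fun i => by rw [hu]; ring
    rw [Finset.sum_congr rfl fun i _ => this i, Finset.sum_sub_distrib, hS3,
      ← Finset.sum_mul, hsum_d]
    ring
  -- the action of B on a vector
  have hBv : ∀ (v : Fin n → ℝ) (i : Fin n), (B *ᵥ v) i
      = (1 / (p (i.val + 1) - p i.val)) * v i + (1 / (1 - p n)) * ∑ j : Fin n, v j := by
    intro v i
    have : (B *ᵥ v) i = ∑ j : Fin n, B i j * v j := rfl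
    rw [this]
    have expand : ∀ j : Fin n, B i j * v j
        = (if i = j then (1 / (p (i.val + 1) - p i.val)) * v j else 0)
          + (1 / (1 - p n)) * v j := by
      intro j
      rw [hB i j]
      by_cases h : i = j
      · rw [if_pos h, if_pos h]; ring
      · rw [if_neg h, if_neg h]; ring
    rw [Finset.sum_congr rfl fun j _ => expand j, Finset.sum_add_distrib,
      Finset.sum_ite_eq Finset.univ i (fun j => (1 / (p (i.val + 1) - p i.val)) * v j),
      if_pos (Finset.mem_univ i), ← Finset.mul_sum]
  -- the bilinear form associated to B
  have hdot : ∀ v w : Fin n → ℝ, v ⬝ᵥ (B *ᵥ w)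
      = ∑ i : Fin n, (1 / (p (i.val + 1) - p i.val)) * (v i * w i)
        + (1 / (1 - p n)) * ((∑ i : Fin n, v i) * (∑ i : Fin n, w i)) := by
    intro v w
    have : v ⬝ᵥ (B *ᵥ w) = ∑ i : Fin n, v i * (B *ᵥ w) i := rfl
    rw [this, Finset.sum_congr rfl fun i _ => by rw [hBv w i]]
    have expand : ∀ i : Fin n, v i * ((1 / (p (i.val + 1) - p i.val)) * w i
          + (1 / (1 - p n)) * ∑ j : Fin n, w j)
        = (1 / (p (i.val + 1) - p i.val)) * (v i * w i)
          + v i * ((1 / (1 - p n)) * ∑ j : Fin n, w j) := fun i => by ring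
    rw [Finset.sum_congr rfl fun i _ => expand i, Finset.sum_add_distrib, ← Finset.sum_mul]
    ring
  -- B *ᵥ u = c
  have key1 : B *ᵥ u = c := by
    funext i
    rw [hBv u i, husum, hu]
    have hdi : p (i.val + 1) - p i.val ≠ 0 := ne_of_gt (hd i)
    have h1pn : (1 : ℝ) - p n ≠ 0 := ne_of_gt h1p
    field_simp
    ring
  -- c ⬝ᵥ u = γ
  have key2 : c ⬝ᵥ u = γ := by
    have : c ⬝ᵥ u = ∑ i : Fin n, c i * u i := rfl
    rw [this]
    have expand : ∀ i : Fin n, c i * u i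
        = (p (i.val + 1) - p i.val) * (c i) ^ 2
          - ((p (i.val + 1) - p i.val) * c i) * S := fun i => by rw [hu]; ring
    rw [Finset.sum_congr rfl fun i _ => expand i, Finset.sum_sub_distrib, ← Finset.sum_mul,
      hS3, hgamma]
    ring
  -- positive definiteness
  have hposdef : B.PosDef := by
    refine Matrix.PosDef.of_dotProduct_mulVec_pos ?_ ?_
    · show Bᴴ = B
      ext i j
      rw [Matrix.conjTranspose_apply, hB j i, hB i j]
      have : (if j = i then 1 / (p (j.val + 1) - p j.val) else 0)
          = (if i = j then 1 / (p (i.val + 1) - p i.val) else 0) := by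
        by_cases h : i = j
        · subst h; rfl
        · rw [if_neg h, if_neg (fun hji => h hji.symm)]
      rw [← this]
      simp
    · intro x hx
      have hsx : star x = x := by
        funext i
        simp
      rw [hsx, hdot x x]
      obtain ⟨i0, hi0⟩ : ∃ i, x i ≠ 0 := by
        by_contra hall
        push_neg at hall
        exact hx (funext hall)
      have hpos : 0 < ∑ i : Fin n, (1 / (p (i.val + 1) - p i.val)) * (x i * x i) := by
        refine Finset.sum_pos' (fun i _ => ?_) ⟨i0, Finset.mem_univ i0, ?_⟩
        · exact mul_nonneg (one_div_pos.2 (hd i)).le (mul_self_nonneg _)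
        · exact mul_pos (one_div_pos.2 (hd i0)) ((mul_self_pos).2 hi0)
      have : 0 ≤ (1 / (1 - p n)) * ((∑ i : Fin n, x i) * (∑ i : Fin n, x i)) :=
        mul_nonneg (one_div_pos.2 h1p).le (mul_self_nonneg _)
      linarith
  refine ⟨?_, hposdef, ?_⟩
  · -- Cauchy–Schwarz
    intro ε
    have hce : c ⬝ᵥ ε = ε ⬝ᵥ (B *ᵥ u) := by
      rw [key1]
      exact dotProduct_comm c ε
    have hγu : γ = u ⬝ᵥ (B *ᵥ u) := by
      rw [key1, ← key2]
      exact dotProduct_comm c u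
    rw [hce, hγu, hdot ε u, hdot u u, hdot ε ε]
    have := cs_aux (fun i : Fin n => 1 / (p (i.val + 1) - p i.val)) (1 / (1 - p n))
      (fun i => (one_div_pos.2 (hd i)).le) (one_div_pos.2 h1p).le ε u
    calc (∑ i : Fin n, (1 / (p (i.val + 1) - p i.val)) * (ε i * u i)
          + (1 / (1 - p n)) * ((∑ i : Fin n, ε i) * (∑ i : Fin n, u i))) ^ 2
        ≤ (∑ i : Fin n, (1 / (p (i.val + 1) - p i.val)) * (ε i * ε i)
            + (1 / (1 - p n)) * ((∑ i : Fin n, ε i) * (∑ i : Fin n, ε i)))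
          * (∑ i : Fin n, (1 / (p (i.val + 1) - p i.val)) * (u i * u i)
            + (1 / (1 - p n)) * ((∑ i : Fin n, u i) * (∑ i : Fin n, u i))) := this
      _ = (∑ i : Fin n, (1 / (p (i.val + 1) - p i.val)) * (u i * u i)
            + (1 / (1 - p n)) * ((∑ i : Fin n, u i) * (∑ i : Fin n, u i)))
          * (∑ i : Fin n, (1 / (p (i.val + 1) - p i.val)) * (ε i * ε i)
            + (1 / (1 - p n)) * ((∑ i : Fin n, ε i) * (∑ i : Fin n, ε i))) := mul_comm _ _
  · -- equality case
    have hdet : IsUnit B.det := (Matrix.PosDef.det_pos hposdef).ne'.isUnit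
    have hinv : B⁻¹ *ᵥ c = u := by
      rw [← key1, Matrix.mulVec_mulVec, Matrix.nonsing_inv_mul B hdet, Matrix.one_mulVec]
    rw [hinv, key1, key2]
    rw [show u ⬝ᵥ c = c ⬝ᵥ u from dotProduct_comm u c, key2]
    ring
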